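/- Let S be a quasi-order on X, a, b ∈ X^ω, and let f, g : ω → ω be injections witnessing a S^inj b and b S^inj a respectively. Then for every ordinal α and every n: n ∈ I_α(a) iff f(n) ∈ I_α(b), and n ∈ I_α(b) iff g(n) ∈ I_α(a). -/

import Mathlib

/-- The derived sets `I_α(a)`. -/
noncomputable def Iset {X : Type*} (S : X → X → Prop) (a : ℕ → X) (α : Ordinal) : Set ℕ :=
  Ordinal.limitRecOn α
    Set.univ
    (fun _ A => {n ∈ A | {m ∈ A | S (a n) (a m)}.Infinite})
    (fun o _ IH => ⋂ (β : Ordinal) (h : β < o), IH β h)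

section Aux

variable {X : Type*} (S : X → X → Prop) (a b : ℕ → X)

lemma Iset_zero : Iset S a 0 = Set.univ :=
  Ordinal.limitRecOn_zero _ _ _

lemma Iset_succ (α : Ordinal) : Iset S a (Order.succ α) =
    {n ∈ Iset S a α | {m ∈ Iset S a α | S (a n) (a m)}.Infinite} :=
  Ordinal.limitRecOn_succ _ _ _ _

lemma Iset_limit {o : Ordinal} (h : Order.IsSuccLimit o) :
    Iset S a o = ⋂ (β : Ordinal) (_ : β < o), Iset S a β := by
  rw [Iset, Ordinal.limitRecOn_limit _ _ _ _ h]; rfl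

variable {S a b}
variable (htrans : ∀ x y z, S x y → S y z → S x z)

include htrans

/-- Lemma A: downward closure of `I_α` under `S`. -/
lemma Iset_down : ∀ (α : Ordinal) (n n' : ℕ), S (a n') (a n) → n ∈ Iset S a α →
    n' ∈ Iset S a α := by
  intro α
  induction α using Ordinal.limitRecOn with
  | zero => simp [Iset_zero]
  | add_one α IH =>
    intro n n' hS hn
    rw [Ordinal.add_one_eq_succ, Iset_succ] at hn ⊢
    obtain ⟨hn1, hn2⟩ := hn
    refine ⟨IH n n' hS hn1, hn2.mono ?_⟩
    rintro m ⟨hm1, hm2⟩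
    exact ⟨hm1, htrans _ _ _ hS hm2⟩
  | limit o ho IH =>
    intro n n' hS hn
    rw [Iset_limit S a ho] at hn ⊢
    simp only [Set.mem_iInter] at hn ⊢
    exact fun β hβ => IH β hβ n n' hS (hn β hβ)

/-- Chains under an expanding self-map. -/
lemma chain_S (h : ℕ → ℕ) (hw : ∀ j, S (a j) (a (h j))) :
    ∀ (k j : ℕ), S (a j) (a (h^[k + 1] j)) := by
  intro k
  induction k with
  | zero => intro j; simpa using hw j
  | succ k IH =>
    intro j
    rw [Function.iterate_succ_apply]
    exact htrans _ _ _ (hw j) (IH (h j))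

/-- Lemma B: `I_α` is closed under an injective expanding self-map. -/
lemma Iset_selfmap (h : ℕ → ℕ) (hinj : Function.Injective h)
    (hw : ∀ j, S (a j) (a (h j))) :
    ∀ (α : Ordinal) (n : ℕ), n ∈ Iset S a α → h n ∈ Iset S a α := by
  intro α
  induction α using Ordinal.limitRecOn with
  | zero => simp [Iset_zero]
  | add_one α IH =>
    intro n hn
    by_cases hcyc : ∃ p, h^[p + 1] n = n
    · obtain ⟨p, hp⟩ := hcyc
      rcases p with _ | q
      · have h1 : h n = n := by simpa using hp
        rw [h1]; exact hn
      · have hback : S (a (h n)) (a n) := by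
          have hc := chain_S htrans h hw q (h n)
          rwa [← Function.iterate_succ_apply, Nat.succ_eq_add_one, hp] at hc
        exact Iset_down htrans _ n (h n) hback hn
    · push_neg at hcyc
      rw [Ordinal.add_one_eq_succ, Iset_succ] at hn ⊢
      obtain ⟨hn1, -⟩ := hn
      have horbit : ∀ k, h^[k] n ∈ Iset S a α := by
        intro k
        induction k with
        | zero => simpa using hn1
        | succ k IHk => rw [Function.iterate_succ_apply']; exact IH _ IHk
      refine ⟨IH n hn1, ?_⟩
      refine Set.infinite_of_injective_forall_mem (f := fun j : ℕ => h^[j + 2] n) ?_ ?_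
      · have key : ∀ i j : ℕ, i < j → h^[i + 2] n ≠ h^[j + 2] n := by
          intro i j hlt hij
          obtain ⟨d, rfl⟩ := Nat.exists_eq_add_of_lt hlt
          have heq : h^[i + 2] (h^[d + 1] n) = h^[i + 2] n := by
            rw [← Function.iterate_add_apply, show i + 2 + (d + 1) = i + d + 1 + 2 by ring]
            exact hij.symm
          exact hcyc d (hinj.iterate (i + 2) heq)
        intro i j hij
        simp only at hij
        rcases Nat.lt_trichotomy i j with hlt | heq | hlt
        · exact absurd hij (key i j hlt)
        · exact heq
        · exact absurd hij.symm (key j i hlt)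
      · intro j
        refine ⟨horbit (j + 2), ?_⟩
        have hc := chain_S htrans h hw j (h n)
        show S (a (h n)) (a (h^[j + 2] n))
        rw [show j + 2 = (j + 1) + 1 from rfl, Function.iterate_succ_apply]
        exact hc
  | limit o ho IH =>
    intro n hn
    rw [Iset_limit S a ho] at hn ⊢
    simp only [Set.mem_iInter] at hn ⊢
    exact fun β hβ => IH β hβ n (hn β hβ)

/-- Lemma C: the backward direction for a pair of witnessing injections. -/
lemma Iset_back {f g : ℕ → ℕ}
    (hf : Function.Injective f) (hg : Function.Injective g)
    (hfw : ∀ n, S (a n) (b (f n))) (hgw : ∀ n, S (b n) (a (g n))) :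
    ∀ (α : Ordinal) (n : ℕ), f n ∈ Iset S b α → n ∈ Iset S a α := by
  intro α
  induction α using Ordinal.limitRecOn with
  | zero => simp [Iset_zero]
  | add_one α IH =>
    intro n hn
    rw [Ordinal.add_one_eq_succ, Iset_succ] at hn ⊢
    obtain ⟨hn1, hn2⟩ := hn
    refine ⟨IH n hn1, ?_⟩
    have hsub : g '' {k ∈ Iset S b α | S (b (f n)) (b k)} ⊆
        {m ∈ Iset S a α | S (a n) (a m)} := by
      rintro m ⟨k, ⟨hk1, hk2⟩, rfl⟩
      have hfg : f (g k) ∈ Iset S b α :=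
        Iset_selfmap htrans (f ∘ g) (hf.comp hg)
          (fun j => htrans _ _ _ (hgw j) (hfw (g j))) α k hk1
      refine ⟨IH (g k) hfg, ?_⟩
      exact htrans _ _ _ (hfw n) (htrans _ _ _ hk2 (hgw k))
    exact ((hn2.image (Set.injOn_of_injective hg)).mono hsub)
  | limit o ho IH =>
    intro n hn
    rw [Iset_limit S b ho] at hn
    rw [Iset_limit S a ho]
    simp only [Set.mem_iInter] at hn ⊢
    exact fun β hβ => IH β hβ n (hn β hβ)

end Aux

/-- If `f, g` witness `a S^inj b` and `b S^inj a`, then `f` and `g` respect the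
derived sets: `n ∈ I_α(a) ↔ f(n) ∈ I_α(b)` and `n ∈ I_α(b) ↔ g(n) ∈ I_α(a)`. -/
theorem stmt_9 {X : Type*} (S : X → X → Prop)
    (hrefl : ∀ x, S x x) (htrans : ∀ x y z, S x y → S y z → S x z)
    (a b : ℕ → X) (f g : ℕ → ℕ)
    (hf : Function.Injective f) (hg : Function.Injective g)
    (hfw : ∀ n, S (a n) (b (f n))) (hgw : ∀ n, S (b n) (a (g n))) :
    (∀ (α : Ordinal) (n : ℕ), n ∈ Iset S a α ↔ f n ∈ Iset S b α) ∧
    (∀ (α : Ordinal) (n : ℕ), n ∈ Iset S b α ↔ g n ∈ Iset S a α) := by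
  constructor
  · intro α n
    constructor
    · intro hn
      have hgf : g (f n) ∈ Iset S a α :=
        Iset_selfmap htrans (g ∘ f) (hg.comp hf)
          (fun j => htrans _ _ _ (hfw j) (hgw (f j))) α n hn
      exact Iset_back htrans hg hf hgw hfw α (f n) hgf
    · exact Iset_back htrans hf hg hfw hgw α n
  · intro α n
    constructor
    · intro hn
      have hfg : f (g n) ∈ Iset S b α :=
        Iset_selfmap htrans (f ∘ g) (hf.comp hg)
          (fun j => htrans _ _ _ (hgw j) (hfw (g j))) α n hn
      exact Iset_back htrans hf hg hfw hgw α (g n) hfg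
    · exact Iset_back htrans hg hf hgw hfw α n
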